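/- Let Z be a positive integrable random variable, let b > 0 be a constant, and let (Y_1, …, Y_n) be a random vector with nonnegative coordinates satisfying Y_1 + ⋯ + Y_n = b almost surely, with (Y_1, …, Y_n) independent of Z. Define X_i := Y_i · Z for i = 1,…,n and S := X_1 + ⋯ + X_n (= b·Z). Then, for every q ∈ [0,1) with ℙ(S > s_q) > 0 and every i ∈ {1,…,n}, r_{q,i} = r̃_{q,i}. -/

import Mathlib

open MeasureTheory Set

/-- Value-at-Risk at level `q`: `inf {s ∈ [0,∞) : ℙ(S ≤ s) ≥ q}`. -/
noncomputable def VaR {Ω : Type*} [MeasurableSpace Ω] (μ : Measure Ω) (S : Ω → ℝ) (q : ℝ) : ℝ :=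
  sInf {s : ℝ | 0 ≤ s ∧ ENNReal.ofReal q ≤ μ {ω | S ω ≤ s}}

/-- The tail event `{S > VaR_q(S)}`. -/
def tailSet {Ω : Type*} [MeasurableSpace Ω] (μ : Measure Ω) (S : Ω → ℝ) (q : ℝ) : Set Ω :=
  {ω | VaR μ S q < S ω}

/-- CTE-based proportional allocation `r_{q,i} = 𝔼[X·1{S>s_q}]/𝔼[S·1{S>s_q}]`. -/
noncomputable def cteAlloc {Ω : Type*} [MeasurableSpace Ω] (μ : Measure Ω)
    (X S : Ω → ℝ) (q : ℝ) : ℝ :=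
  (∫ ω in tailSet μ S q, X ω ∂μ) / (∫ ω in tailSet μ S q, S ω ∂μ)

/-- GTE-based proportional allocation `r̃_{q,i} = 𝔼[(X/S)·1{S>s_q}]/ℙ(S>s_q)`. -/
noncomputable def gteAlloc {Ω : Type*} [MeasurableSpace Ω] (μ : Measure Ω)
    (X S : Ω → ℝ) (q : ℝ) : ℝ :=
  (∫ ω in tailSet μ S q, X ω / S ω ∂μ) / (μ (tailSet μ S q)).toReal

/-- Multiplicative background risk model: if `X_i = Y_i·Z` with `(Y_1,…,Y_n)` independent of
`Z` and `Y_1 + ⋯ + Y_n = b` a.s., then the CTE-based and GTE-based proportional allocations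
agree at every level. -/
theorem mbrm_mem_W
    {Ω : Type*} [MeasurableSpace Ω] (μ : Measure Ω) [IsProbabilityMeasure μ]
    (n : ℕ) (Z : Ω → ℝ) (hZmeas : Measurable Z) (hZpos : ∀ ω, 0 < Z ω)
    (hZint : Integrable Z μ)
    (b : ℝ) (hb : 0 < b)
    (Y : Fin n → Ω → ℝ) (hYmeas : ∀ i, Measurable (Y i)) (hYnonneg : ∀ i ω, 0 ≤ Y i ω)
    (hYsum : ∀ᵐ ω ∂μ, ∑ i, Y i ω = b)
    (hindep : ProbabilityTheory.IndepFun (fun ω => fun i => Y i ω) Z μ)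
    (X : Fin n → Ω → ℝ) (hX : ∀ i, X i = fun ω => Y i ω * Z ω)
    (S : Ω → ℝ) (hS : S = fun ω => ∑ i, X i ω) :
    ∀ q ∈ Set.Ico (0 : ℝ) 1, 0 < μ (tailSet μ S q) →
      ∀ i, cteAlloc μ (X i) S q = gteAlloc μ (X i) S q := by
  intro q hq hpos i
  classical
  set c := VaR μ S q with hc
  set T' : Set Ω := {ω | c / b < Z ω} with hT'
  have hT'meas : MeasurableSet T' := measurableSet_lt measurable_const hZmeas
  have hSae : S =ᵐ[μ] fun ω => b * Z ω := by
    filter_upwards [hYsum] with ω hω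
    simp only [hS, hX]
    rw [← Finset.sum_mul, hω]
  have hTT' : tailSet μ S q =ᵐ[μ] T' := by
    filter_upwards [hSae] with ω hω
    have : (ω ∈ tailSet μ S q) ↔ (ω ∈ T') := by
      simp only [tailSet, hT', Set.mem_setOf_eq, ← hc, hω, div_lt_iff₀ hb, mul_comm]
    exact eq_iff_iff.mpr this
  have hμT : μ (tailSet μ S q) = μ T' := measure_congr hTT'
  have hpos' : 0 < μ T' := hμT ▸ hpos
  -- independence consequence
  have hmul : ∀ (g : ℝ → ℝ), Measurable g →
      (∫ ω, Y i ω * g (Z ω) ∂μ) = (∫ ω, Y i ω ∂μ) * ∫ ω, g (Z ω) ∂μ := by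
    intro g hg
    have h1 : ProbabilityTheory.IndepFun (Y i) (fun ω => g (Z ω)) μ :=
      hindep.comp (measurable_pi_apply i) hg
    exact ProbabilityTheory.IndepFun.integral_fun_mul_eq_mul_integral h1 (hYmeas i).aestronglyMeasurable
      (hg.comp hZmeas).aestronglyMeasurable
  set g1 : ℝ → ℝ := (Set.Ioi (c / b)).indicator 1 with hg1
  have hg1meas : Measurable g1 := measurable_one.indicator measurableSet_Ioi
  have hg1val : ∀ ω, g1 (Z ω) = if ω ∈ T' then 1 else 0 := by
    intro ω
    by_cases h : ω ∈ T' <;>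
      simp [hg1, Set.indicator, Set.mem_Ioi, hT', Set.mem_setOf_eq] at h ⊢ <;> simp [h]
  set EY := ∫ ω, Y i ω ∂μ with hEY
  set I := ∫ ω in T', Z ω ∂μ with hI
  set m := (μ T').toReal with hm
  have hmpos : 0 < m := ENNReal.toReal_pos hpos'.ne' (measure_ne_top μ T')
  -- I > 0
  have hIpos : 0 < I := by
    rw [hI]
    rw [setIntegral_pos_iff_support_of_nonneg_ae
      (Filter.Eventually.of_forall fun ω => (hZpos ω).le) (hZint.integrableOn)]
    have : Function.support Z ∩ T' = T' := by
      apply Set.inter_eq_self_of_subset_right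
      intro ω _
      exact (hZpos ω).ne'
    rwa [this]
  -- numerator of cte
  have hnum : (∫ ω in tailSet μ S q, X i ω ∂μ) = EY * I := by
    rw [setIntegral_congr_set hTT', ← integral_indicator hT'meas]
    have : (T'.indicator fun ω => X i ω) = fun ω => Y i ω * (Z ω * g1 (Z ω)) := by
      funext ω
      by_cases h : ω ∈ T' <;> simp [Set.indicator, h, hg1val, hX]
    rw [this, hmul (fun z => z * g1 z) (measurable_id.mul hg1meas)]
    congr 1
    rw [hI, ← integral_indicator hT'meas]
    congr 1
    funext ω
    by_cases h : ω ∈ T' <;> simp [Set.indicator, h, hg1val]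
  -- denominator of cte
  have hden : (∫ ω in tailSet μ S q, S ω ∂μ) = b * I := by
    rw [setIntegral_congr_set hTT',
      setIntegral_congr_ae hT'meas (hSae.mono fun ω hω _ => hω), hI, integral_const_mul]
  -- μ T' as integral of indicator
  have hmint : (∫ ω, g1 (Z ω) ∂μ) = m := by
    have : (fun ω => g1 (Z ω)) = T'.indicator fun _ => (1 : ℝ) := by
      funext ω
      by_cases h : ω ∈ T' <;> simp [Set.indicator, h, hg1val]
    rw [this, integral_indicator hT'meas, setIntegral_const, smul_eq_mul, mul_one, hm, measureReal_def]
  -- numerator of gte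
  have hnum' : (∫ ω in tailSet μ S q, X i ω / S ω ∂μ) = EY / b * m := by
    rw [setIntegral_congr_set hTT']
    have hae : ∀ᵐ ω ∂μ, X i ω / S ω = Y i ω / b := by
      filter_upwards [hYsum] with ω hω
      have hSω : S ω = b * Z ω := by
        simp only [hS, hX]; rw [← Finset.sum_mul, hω]
      rw [hX i, hSω]
      have h1 : Z ω ≠ 0 := (hZpos ω).ne'
      have h2 : b ≠ 0 := hb.ne'
      field_simp
    rw [setIntegral_congr_ae hT'meas (hae.mono fun ω hω _ => hω),
      ← integral_indicator hT'meas]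
    have : (T'.indicator fun ω => Y i ω / b) = fun ω => (Y i ω * g1 (Z ω)) / b := by
      funext ω
      by_cases h : ω ∈ T' <;> simp [Set.indicator, h, hg1val]
    rw [this]
    rw [integral_div, hmul g1 hg1meas, hmint, hEY]
    ring
  -- conclusion
  rw [cteAlloc, gteAlloc, hnum, hden, hnum', hμT, ← hm]
  field_simp
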